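/- Suppose complex numbers Φ₀, Φ₁, Φ₂, Φ₃, Φ₁₂, Φ₁₃, Φ₂₃ (attached to the seven vertices n, n+e₁, n+e₂, n+e₃, n+e₁+e₂, n+e₁+e₃, n+e₂+e₃ of a unit cube) satisfy the incoming linear system: Φ₂ − Φ₂₃u₁ + Φ₀w₁ + Φ₃κ₁u₁w₁ = 0, Φ₀ − Φ₃u₂ + Φ₁w₂ + Φ₁₃κ₂u₂w₂ = 0, Φ₂ − Φ₀u₃ + Φ₁₂w₃ + Φ₁κ₃u₃w₃ = 0. Then there exists Ψ ∈ ℂ (the linear variable at the eighth vertex n+e₁+e₂+e₃) such that the outgoing linear system holds with the evolved variables: Φ₁₂ − Ψu₁′ + Φ₁w₁′ + Φ₁₃κ₁u₁′w₁′ = 0, Φ₂ − Φ₂₃u₂′ + Φ₁₂w₂′ + Ψκ₂u₂′w₂′ = 0, Φ₂₃ − Φ₃u₃′ + Ψw₃′ + Φ₁₃κ₃u₃′w₃′ = 0 (the last equation correcting an evident misprint in the paper, where the coefficient of κ₃u₃′w₃′ should be the linear variable at n+e₁+e₃). Thus the incoming and outgoing linear systems around a vertex of the cubic lattice are compatible exactly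 under the local evolution map. -/

import Mathlib

/-- If the seven linear variables around a vertex of the
cubic lattice satisfy the incoming linear system, then there exists a value
`Ψ` of the linear variable at the eighth vertex such that the outgoing
linear system holds with the evolved dynamical variables: the incoming and
outgoing linear systems are compatible exactly under the local evolution map. -/
theorem statement5
    (u₁ w₁ u₂ w₂ u₃ w₃ κ₁ κ₂ κ₃ D₁ D₂ D₃ u₁' w₁' u₂' w₂' u₃' w₃' : ℂ)
    (hu₁ : u₁ ≠ 0) (hw₁ : w₁ ≠ 0) (hu₂ : u₂ ≠ 0) (hw₂ : w₂ ≠ 0)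
    (hu₃ : u₃ ≠ 0) (hw₃ : w₃ ≠ 0)
    (hκ₁ : κ₁ ≠ 0) (hκ₂ : κ₂ ≠ 0) (hκ₃ : κ₃ ≠ 0)
    (hD₁def : D₁ = κ₁ * u₁ * w₂ + κ₃ * u₂ * w₃ + κ₁ * κ₃ * u₁ * w₃)
    (hD₂def : D₂ = u₂ * u₃ + u₂ * w₁ + κ₁ * u₁ * w₁)
    (hD₃def : D₃ = w₁ * w₂ + u₃ * w₂ + κ₃ * u₃ * w₃)
    (hD₁ : D₁ ≠ 0) (hD₂ : D₂ ≠ 0) (hD₃ : D₃ ≠ 0)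
    (hu₁' : u₁' = κ₂ * u₁ * u₂ * w₂ / D₁)
    (hw₁' : w₁' = D₃ / w₃)
    (hu₂' : u₂' = u₁ * u₂ * u₃ / D₂)
    (hw₂' : w₂' = w₁ * w₂ * w₃ / D₃)
    (hu₃' : u₃' = D₂ / u₁)
    (hw₃' : w₃' = κ₂ * u₂ * w₂ * w₃ / D₁)
    (Φ₀ Φ₁ Φ₂ Φ₃ Φ₁₂ Φ₁₃ Φ₂₃ : ℂ)
    (hin₁ : Φ₂ - Φ₂₃ * u₁ + Φ₀ * w₁ + Φ₃ * (κ₁ * u₁ * w₁) = 0)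
    (hin₂ : Φ₀ - Φ₃ * u₂ + Φ₁ * w₂ + Φ₁₃ * (κ₂ * u₂ * w₂) = 0)
    (hin₃ : Φ₂ - Φ₀ * u₃ + Φ₁₂ * w₃ + Φ₁ * (κ₃ * u₃ * w₃) = 0) :
    ∃ Ψ : ℂ,
      (Φ₁₂ - Ψ * u₁' + Φ₁ * w₁' + Φ₁₃ * (κ₁ * u₁' * w₁') = 0) ∧
      (Φ₂ - Φ₂₃ * u₂' + Φ₁₂ * w₂' + Ψ * (κ₂ * u₂' * w₂') = 0) ∧
      (Φ₂₃ - Φ₃ * u₃' + Ψ * w₃' + Φ₁₃ * (κ₃ * u₃' * w₃') = 0) := by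
  subst hu₁' hw₁' hu₂' hw₂' hu₃' hw₃' hD₁def hD₂def hD₃def
  have h5 : u₁ * (κ₂ * u₂ * w₂ * w₃) ≠ 0 := by
    simp [hu₁, hκ₂, hu₂, hw₂, hw₃]
  have h6 : u₁ * (κ₂ * u₂ * w₂ * w₃) *
      (κ₁ * u₁ * w₂ + κ₃ * u₂ * w₃ + κ₁ * κ₃ * u₁ * w₃) ≠ 0 := mul_ne_zero h5 hD₁
  have h7 : u₁ * (κ₂ * u₂ * w₂ * w₃) *
      ((u₂ * u₃ + u₂ * w₁ + κ₁ * u₁ * w₁) * (w₁ * w₂ + u₃ * w₂ + κ₃ * u₃ * w₃)) ≠ 0 :=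
    mul_ne_zero h5 (mul_ne_zero hD₂ hD₃)
  refine ⟨(Φ₃ * (u₂ * u₃ + u₂ * w₁ + κ₁ * u₁ * w₁) *
      (κ₁ * u₁ * w₂ + κ₃ * u₂ * w₃ + κ₁ * κ₃ * u₁ * w₃) -
      Φ₂₃ * u₁ * (κ₁ * u₁ * w₂ + κ₃ * u₂ * w₃ + κ₁ * κ₃ * u₁ * w₃) -
      Φ₁₃ * (κ₃ * κ₂ * (u₂ * u₃ + u₂ * w₁ + κ₁ * u₁ * w₁) * u₂ * w₂ * w₃)) /
      (u₁ * (κ₂ * u₂ * w₂ * w₃)), ?_, ?_, ?_⟩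
  · set D₁ := κ₁ * u₁ * w₂ + κ₃ * u₂ * w₃ + κ₁ * κ₃ * u₁ * w₃ with hD₁e
    set D₂ := u₂ * u₃ + u₂ * w₁ + κ₁ * u₁ * w₁ with hD₂e
    set D₃ := w₁ * w₂ + u₃ * w₂ + κ₃ * u₃ * w₃ with hD₃e
    field_simp [h5, h6, h7, hD₁, hD₂, hD₃]
    rw [hD₁e, hD₂e, hD₃e]
    linear_combination (κ₁ * u₁ * w₂ + κ₃ * u₂ * w₃ + κ₁ * κ₃ * u₁ * w₃) * ((-1 : ℂ)) * hin₁ + (κ₁ * u₁ * w₂ + κ₃ * u₂ * w₃ + κ₁ * κ₃ * u₁ * w₃) * (w₁ + u₃) * hin₂ + (κ₁ * u₁ * w₂ + κ₃ * u₂ * w₃ + κ₁ * κ₃ * u₁ * w₃) * hin₃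
  · set D₁ := κ₁ * u₁ * w₂ + κ₃ * u₂ * w₃ + κ₁ * κ₃ * u₁ * w₃ with hD₁e
    set D₂ := u₂ * u₃ + u₂ * w₁ + κ₁ * u₁ * w₁ with hD₂e
    set D₃ := w₁ * w₂ + u₃ * w₂ + κ₃ * u₃ * w₃ with hD₃e
    field_simp [h5, h6, h7, hD₁, hD₂, hD₃]
    rw [hD₁e, hD₂e, hD₃e]
    linear_combination ((u₂ * u₃ + u₂ * w₁ + κ₁ * u₁ * w₁) * u₃ * (w₂ + κ₃ * w₃)) * hin₁ + (-((u₂ * u₃ + u₂ * w₁ + κ₁ * u₁ * w₁) * u₃ * w₁ * κ₃ * w₃)) * hin₂ + ((u₂ * u₃ + u₂ * w₁ + κ₁ * u₁ * w₁) * w₁ * w₂) * hin₃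
  · set D₁ := κ₁ * u₁ * w₂ + κ₃ * u₂ * w₃ + κ₁ * κ₃ * u₁ * w₃ with hD₁e
    set D₂ := u₂ * u₃ + u₂ * w₁ + κ₁ * u₁ * w₁ with hD₂e
    set D₃ := w₁ * w₂ + u₃ * w₂ + κ₃ * u₃ * w₃ with hD₃e
    field_simp [h5, h6, h7, hD₁, hD₂, hD₃]
    ring
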